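/- Let G be a finite group and let p be a prime dividing |G|. Then G is a solvable group having a normal Sylow p-subgroup if and only if there exists a chain {e} = H_0 ≤ H_1 ≤ ⋯ ≤ H_n = G of subgroups, each H_{i-1} normal in H_i, such that every quotient H_i/H_{i-1} has prime order and, for each 1 ≤ i < n, if |H_i/H_{i-1}| ≠ p then |H_{i+1}/H_i| ≠ p. -/

import Mathlib

universe u

open Subgroup


open scoped commutatorElement in
lemma aux_exists_normal_prime_index (G : Type u) [Group G] [Finite G] [Group.IsSolvable G]
    [Nontrivial G] : ∃ N : Subgroup G, N.Normal ∧ N.index.Prime := by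
  have hcomm : commutator G ≠ ⊤ := by
    intro h
    have hall : ∀ n, derivedSeries G n = ⊤ := by
      intro n
      induction n with
      | zero => exact derivedSeries_zero G
      | succ n ih => rw [derivedSeries_succ, ih, ← commutator_def, h]
    obtain ⟨n, hn⟩ := Group.IsSolvable.solvable (G := G)
    rw [hall n] at hn
    exact (bot_ne_top (α := Subgroup G)) hn.symm
  obtain ⟨M, hM, hle⟩ := (eq_top_or_exists_le_coatom (commutator G)).resolve_left hcomm
  haveI hMn : M.Normal := by
    constructor
    intro n hn g
    have h1 : ⁅g, n⁆ * n ∈ M :=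
      mul_mem (hle (commutator_def G ▸ commutator_mem_commutator (mem_top g) (mem_top n))) hn
    have h2 : g * n * g⁻¹ = ⁅g, n⁆ * n := by group
    rwa [h2]
  have hindex1 : M.index ≠ 1 := fun h => hM.1 (Subgroup.index_eq_one.mp h)
  have hindex0 : M.index ≠ 0 := Subgroup.index_ne_zero_of_finite
  haveI : Nontrivial (G ⧸ M) := by
    rw [← Finite.one_lt_card_iff_nontrivial, ← Subgroup.index_eq_card]
    omega
  haveI : IsSimpleGroup (G ⧸ M) := by
    constructor
    intro K _
    have hMle : M ≤ K.comap (QuotientGroup.mk' M) := by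
      intro x hx
      show QuotientGroup.mk' M x ∈ K
      have hx1 : QuotientGroup.mk' M x = 1 := (QuotientGroup.eq_one_iff x).mpr hx
      rw [hx1]; exact one_mem K
    have hKmap : (K.comap (QuotientGroup.mk' M)).map (QuotientGroup.mk' M) = K :=
      Subgroup.map_comap_eq_self_of_surjective (QuotientGroup.mk'_surjective M) K
    rcases hMle.eq_or_lt with heq | hlt
    · left
      rw [← hKmap, ← heq]
      apply (Subgroup.map_eq_bot_iff _).mpr
      rw [QuotientGroup.ker_mk' M]
    · right
      rw [← hKmap, hM.2 _ hlt]
      exact Subgroup.map_top_of_surjective _ (QuotientGroup.mk'_surjective M)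
  have hcommQ : ∀ a b : G ⧸ M, a * b = b * a :=
    IsSimpleGroup.comm_iff_isSolvable.mpr inferInstance
  letI : CommGroup (G ⧸ M) := { (inferInstance : Group (G ⧸ M)) with mul_comm := hcommQ }
  refine ⟨M, hMn, ?_⟩
  have := IsSimpleGroup.prime_card (α := G ⧸ M)
  rwa [← Subgroup.index_eq_card] at this


lemma aux_relindex_map_subtype {G : Type u} [Group G] (N : Subgroup G) (A B : Subgroup N) :
    (A.map N.subtype).relIndex (B.map N.subtype) = A.relIndex B := by
  rw [← Subgroup.relIndex_comap, Subgroup.comap_map_eq_self_of_injective N.subtype_injective]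

lemma aux_chain_snoc {G : Type u} [Group G] (p : ℕ) (N : Subgroup G) (hN : N.Normal)
    (hq : N.index.Prime) (m : ℕ) (f : Fin (m + 1) → Subgroup N)
    (hf0 : f 0 = ⊥) (hftop : f (Fin.last m) = ⊤)
    (hstep : ∀ i : Fin m, f i.castSucc ≤ f i.succ ∧
      (∀ x ∈ f i.succ, ∀ h ∈ f i.castSucc, x * h * x⁻¹ ∈ f i.castSucc) ∧
      ((f i.castSucc).relIndex (f i.succ)).Prime)
    (hmono : ∀ i j : Fin m, (i : ℕ) ≤ (j : ℕ) → (f i.castSucc).relIndex (f i.succ) ≠ p →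
      (f j.castSucc).relIndex (f j.succ) ≠ p)
    (hpc : (∀ i : Fin m, (f i.castSucc).relIndex (f i.succ) = p) ∨ N.index ≠ p) :
    ∃ (n : ℕ) (g : Fin (n + 1) → Subgroup G),
      g 0 = ⊥ ∧ g (Fin.last n) = ⊤ ∧
      (∀ i : Fin n, g i.castSucc ≤ g i.succ ∧
        (∀ x ∈ g i.succ, ∀ h ∈ g i.castSucc, x * h * x⁻¹ ∈ g i.castSucc) ∧
        ((g i.castSucc).relIndex (g i.succ)).Prime) ∧
      (∀ i j : Fin n, (i : ℕ) ≤ (j : ℕ) → (g i.castSucc).relIndex (g i.succ) ≠ p →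
        (g j.castSucc).relIndex (g j.succ) ≠ p) := by
  set g : Fin (m + 2) → Subgroup G := Fin.snoc (fun i => (f i).map N.subtype) ⊤ with hg
  have hmapN : (⊤ : Subgroup N).map N.subtype = N := by
    rw [← MonoidHom.range_eq_map, Subgroup.range_subtype]
  have hzero : (0 : Fin (m + 2)) = Fin.castSucc 0 := by ext; simp
  have hgN : g (Fin.castSucc (Fin.last m)) = N := by
    rw [hg, Fin.snoc_castSucc, hftop, hmapN]
  have hrel_last : (g (Fin.castSucc (Fin.last m))).relIndex (g (Fin.last (m + 1))) = N.index := by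
    rw [hgN, hg, Fin.snoc_last, Subgroup.relIndex_top_right]
  have hrel_cast : ∀ j : Fin m,
      (g (Fin.castSucc j.castSucc)).relIndex (g (Fin.castSucc j.succ)) =
        (f j.castSucc).relIndex (f j.succ) := by
    intro j
    rw [hg, Fin.snoc_castSucc, Fin.snoc_castSucc, aux_relindex_map_subtype]
  refine ⟨m + 1, g, ?_, ?_, ?_, ?_⟩
  · rw [hzero, hg, Fin.snoc_castSucc, hf0, Subgroup.map_bot]
  · rw [hg, Fin.snoc_last]
  · intro i
    rcases Fin.eq_castSucc_or_eq_last i with ⟨j, rfl⟩ | rfl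
    · rw [Fin.succ_castSucc]
      refine ⟨?_, ?_, ?_⟩
      · rw [hg, Fin.snoc_castSucc, Fin.snoc_castSucc]
        exact Subgroup.map_mono (hstep j).1
      · rw [hg, Fin.snoc_castSucc, Fin.snoc_castSucc]
        rintro x hx h hh
        rw [Subgroup.mem_map] at hx hh
        obtain ⟨y, hy, rfl⟩ := hx
        obtain ⟨z, hz, rfl⟩ := hh
        refine ⟨y * z * y⁻¹, (hstep j).2.1 y hy z hz, by simp⟩
      · rw [hrel_cast j]
        exact (hstep j).2.2
    · rw [Fin.succ_last]
      refine ⟨?_, ?_, ?_⟩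
      · rw [hg, Fin.snoc_last]; exact le_top
      · rw [hgN, hg, Fin.snoc_last]
        intro x _ h hh
        exact hN.conj_mem h hh x
      · rw [hrel_last]; exact hq
  · intro i j hij hi
    rcases Fin.eq_castSucc_or_eq_last j with ⟨j', rfl⟩ | rfl
    · rcases Fin.eq_castSucc_or_eq_last i with ⟨i', rfl⟩ | rfl
      · rw [Fin.succ_castSucc, hrel_cast j']
        rw [Fin.succ_castSucc, hrel_cast i'] at hi
        exact hmono i' j' (by simpa using hij) hi
      · exfalso
        have h1 : (j' : ℕ) < m := j'.isLt
        simp [Fin.val_last] at hij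
        omega
    · rw [Fin.succ_last, hrel_last]
      rcases hpc with hall | hne
      · rcases Fin.eq_castSucc_or_eq_last i with ⟨i', rfl⟩ | rfl
        · exfalso
          rw [Fin.succ_castSucc, hrel_cast i'] at hi
          exact hi (hall i')
        · rwa [Fin.succ_last, hrel_last] at hi
      · exact hne


lemma aux_forward (p : ℕ) (hp : p.Prime) (k : ℕ) :
    ∀ (G : Type u) [Group G] [Finite G], Nat.card G ≤ k → IsSolvable G →
    ∀ P : Sylow p G, (P : Subgroup G).Normal →
    ∃ (n : ℕ) (f : Fin (n + 1) → Subgroup G),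
      f 0 = ⊥ ∧ f (Fin.last n) = ⊤ ∧
      (∀ i : Fin n, f i.castSucc ≤ f i.succ ∧
        (∀ x ∈ f i.succ, ∀ h ∈ f i.castSucc, x * h * x⁻¹ ∈ f i.castSucc) ∧
        ((f i.castSucc).relIndex (f i.succ)).Prime) ∧
      (∀ i j : Fin n, (i : ℕ) ≤ (j : ℕ) → (f i.castSucc).relIndex (f i.succ) ≠ p →
        (f j.castSucc).relIndex (f j.succ) ≠ p) := by
  haveI : Fact p.Prime := ⟨hp⟩
  induction k with
  | zero =>
    intro G _ _ hcard _ _ _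
    have : 0 < Nat.card G := Nat.card_pos
    omega
  | succ k ih =>
    intro G _ _ hcard hsolv P hPnorm
    rcases subsingleton_or_nontrivial G with hG | hG
    · refine ⟨0, fun _ => ⊤, Subsingleton.elim _ _, rfl, fun i => i.elim0, fun i => i.elim0⟩
    haveI : Group.IsSolvable G := hsolv
    by_cases htop : (P : Subgroup G) = ⊤
    · -- G is a p-group
      have hpG : IsPGroup p G := by
        have := P.isPGroup'
        rw [htop] at this
        exact this.of_equiv Subgroup.topEquiv
      obtain ⟨N, hNnorm, hNq⟩ := aux_exists_normal_prime_index G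
      obtain ⟨a, ha⟩ := IsPGroup.iff_card.mp hpG
      have hNp : N.index = p := by
        have hdvd : N.index ∣ p ^ a := ha ▸ Subgroup.index_dvd_card N
        exact (Nat.prime_dvd_prime_iff_eq hNq hp).mp (hNq.dvd_of_dvd_pow hdvd)
      have hNlt : Nat.card N < Nat.card G := by
        have h1 : Nat.card N * N.index = Nat.card G := Subgroup.card_mul_index N
        have h2 : 2 ≤ N.index := hNq.two_le
        have h3 : 0 < Nat.card N := Nat.card_pos
        nlinarith
      have hNcard : Nat.card N ≤ k := by omega
      have hpN : IsPGroup p N := hpG.to_subgroup N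
      let PN : Sylow p N := ⟨⊤, hpN.of_equiv Subgroup.topEquiv.symm,
        fun _ hle => top_unique hle⟩
      obtain ⟨m, f, hf0, hftop, hfstep, hfmono⟩ :=
        ih N hNcard (show Group.IsSolvable N from inferInstance) PN (by exact inferInstance)
      have hall : ∀ i : Fin m, (f i.castSucc).relIndex (f i.succ) = p := by
        intro i
        obtain ⟨b, hb⟩ := IsPGroup.iff_card.mp hpN
        have hdvd : (f i.castSucc).relIndex (f i.succ) ∣ p ^ b := by
          rw [← hb]
          exact (Subgroup.relIndex_dvd_index_of_le (hfstep i).1).trans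
            (Subgroup.index_dvd_card _)
        exact (Nat.prime_dvd_prime_iff_eq (hfstep i).2.2 hp).mp
          (((hfstep i).2.2).dvd_of_dvd_pow hdvd)
      exact aux_chain_snoc p N hNnorm hNq m f hf0 hftop hfstep hfmono (Or.inl hall)
    · -- P ≠ ⊤
      haveI := hPnorm
      have hPindex1 : (P : Subgroup G).index ≠ 1 := fun h => htop (Subgroup.index_eq_one.mp h)
      haveI : Nontrivial (G ⧸ (P : Subgroup G)) := by
        rw [← Finite.one_lt_card_iff_nontrivial, ← Subgroup.index_eq_card]
        have := Subgroup.index_ne_zero_of_finite (H := (P : Subgroup G))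
        omega
      obtain ⟨K, hKnorm, hKq⟩ := aux_exists_normal_prime_index (G ⧸ (P : Subgroup G))
      set N := K.comap (QuotientGroup.mk' (P : Subgroup G)) with hNdef
      haveI hNnorm : N.Normal := Subgroup.Normal.comap hKnorm _
      have hNindex : N.index = K.index := by
        rw [hNdef, Subgroup.index_comap, MonoidHom.range_eq_top_of_surjective _
          (QuotientGroup.mk'_surjective _), Subgroup.relIndex_top_right]
      have hNq : N.index.Prime := hNindex ▸ hKq
      have hPle : (P : Subgroup G) ≤ N := by
        intro x hx
        show ((x : G ⧸ (P : Subgroup G))) ∈ K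
        rw [(QuotientGroup.eq_one_iff x).mpr hx]
        exact one_mem K
      have hpnd : ¬ p ∣ (P : Subgroup G).index := P.not_dvd_index
      have hNnep : N.index ≠ p := by
        intro h
        have hd : N.index ∣ (P : Subgroup G).index := Subgroup.index_dvd_of_le hPle
        rw [h] at hd
        exact hpnd hd
      have hNne : N ≠ ⊤ := fun h => hNq.ne_one (by rw [h, Subgroup.index_top])
      have hNlt : Nat.card N < Nat.card G := by
        have h1 : Nat.card N * N.index = Nat.card G := Subgroup.card_mul_index N
        have h2 : 2 ≤ N.index := hNq.two_le
        have h3 : 0 < Nat.card N := Nat.card_pos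
        nlinarith
      have hNcard : Nat.card N ≤ k := by omega
      haveI : ((P : Subgroup G).subgroupOf N).Normal := by
        constructor
        intro x hx g
        rw [Subgroup.mem_subgroupOf] at hx ⊢
        exact hPnorm.conj_mem _ hx _
      obtain ⟨m, f, hf0, hftop, hfstep, hfmono⟩ :=
        ih N hNcard (show Group.IsSolvable N from inferInstance) (P.subtype hPle) (by rw [Sylow.coe_subtype]; infer_instance)
      exact aux_chain_snoc p N hNnorm hNq m f hf0 hftop hfstep hfmono (Or.inr hNnep)


lemma aux_backward {G : Type*} [Group G] [Finite G]
    (p : ℕ) (hp : p.Prime) (hdvd : p ∣ Nat.card G)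
    (n : ℕ) (f : Fin (n + 1) → Subgroup G)
    (h0 : f 0 = ⊥) (htop : f (Fin.last n) = ⊤)
    (hstep : ∀ i : Fin n, f i.castSucc ≤ f i.succ ∧
          (∀ x ∈ f i.succ, ∀ h ∈ f i.castSucc, x * h * x⁻¹ ∈ f i.castSucc) ∧
          ((f i.castSucc).relIndex (f i.succ)).Prime)
    (hcons : ∀ i j : Fin n, (j : ℕ) = (i : ℕ) + 1 →
          (f i.castSucc).relIndex (f i.succ) ≠ p →
          (f j.castSucc).relIndex (f j.succ) ≠ p) :
    IsSolvable G ∧ ∃ P : Sylow p G, (P : Subgroup G).Normal := by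
  haveI : Fact p.Prime := ⟨hp⟩
  -- solvability
  have hsolv : ∀ i : Fin (n + 1), Group.IsSolvable ↥(f i) := by
    intro i
    induction i using Fin.induction with
    | zero => rw [h0]; infer_instance
    | succ i ihi =>
      obtain ⟨hle, hnorm, hprime⟩ := hstep i
      haveI : Group.IsSolvable ↥(f i.castSucc) := ihi
      set K' := (f i.castSucc).subgroupOf (f i.succ) with hK'
      haveI : K'.Normal := by
        constructor
        intro x hx g
        rw [Subgroup.mem_subgroupOf] at hx ⊢
        exact hnorm (g : G) g.2 (x : G) hx
      haveI : Group.IsSolvable ↥K' :=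
        solvable_of_solvable_injective
          (f := (Subgroup.subgroupOfEquivOfLe hle).toMonoidHom)
          (Subgroup.subgroupOfEquivOfLe hle).injective
      haveI : Fact K'.index.Prime := ⟨hprime⟩
      haveI : IsCyclic (↥(f i.succ) ⧸ K') :=
        isCyclic_of_prime_card (p := K'.index) (Subgroup.index_eq_card K').symm
      haveI : Group.IsSolvable (↥(f i.succ) ⧸ K') := by
        letI := IsCyclic.commGroup (α := ↥(f i.succ) ⧸ K')
        infer_instance
      exact solvable_of_ker_le_range K'.subtype (QuotientGroup.mk' K')
        (by rw [QuotientGroup.ker_mk', Subgroup.range_subtype])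
  have hsolvG : IsSolvable G := by
    haveI : Group.IsSolvable ↥(⊤ : Subgroup G) := by rw [← htop]; exact hsolv (Fin.last n)
    exact solvable_of_surjective
      (f := (Subgroup.topEquiv : ↥(⊤ : Subgroup G) ≃* G).toMonoidHom)
      (fun g => ⟨⟨g, trivial⟩, rfl⟩)
  -- monotone
  set q : Fin n → ℕ := fun i => (f i.castSucc).relIndex (f i.succ) with hqdef
  have hmono : ∀ (d : ℕ) (i j : Fin n), (j : ℕ) = (i : ℕ) + d → q i ≠ p → q j ≠ p := by
    intro d
    induction d with
    | zero => intro i j hij hi; rwa [show j = i from Fin.ext (by omega)]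
    | succ d ihd =>
      intro i j hij hi
      have hlt : (i : ℕ) + d < n := by have := j.isLt; omega
      exact hcons ⟨(i : ℕ) + d, hlt⟩ j (by simp; omega) (ihd i ⟨(i : ℕ) + d, hlt⟩ rfl hi)
  -- chain monotone
  have hlechain : ∀ j : Fin (n + 1), ∀ i : Fin (n + 1), (i : ℕ) ≤ (j : ℕ) → f i ≤ f j := by
    intro j
    induction j using Fin.induction with
    | zero =>
      intro i hij
      simp only [Fin.val_zero] at hij
      rw [show i = 0 from Fin.ext (by simp only [Fin.val_zero]; omega)]
    | succ j ihj =>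
      intro i hij
      rcases Nat.lt_or_ge (i : ℕ) ((j.succ : ℕ)) with hlt | hge
      · refine (ihj i ?_).trans (hstep j).1
        simp only [Fin.coe_castSucc]
        rw [Fin.val_succ] at hlt
        omega
      · rw [show i = j.succ from Fin.ext (by omega)]
  -- choice of k
  obtain ⟨k, hbelow, habove⟩ : ∃ k : Fin (n + 1),
      (∀ j : Fin n, (j : ℕ) < (k : ℕ) → q j = p) ∧
      (∀ j : Fin n, (k : ℕ) ≤ (j : ℕ) → q j ≠ p) := by
    by_cases hex : ∃ m : ℕ, ∃ hm : m < n, q ⟨m, hm⟩ ≠ p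
    · obtain ⟨hm0n, hm0q⟩ := Nat.find_spec hex
      refine ⟨⟨Nat.find hex, by omega⟩, ?_, ?_⟩
      · intro j hj
        have hmin := Nat.find_min hex (m := (j : ℕ)) (by simpa using hj)
        push_neg at hmin
        have := hmin j.isLt
        simpa using this
      · intro j hjge
        simp only at hjge
        rcases Nat.eq_or_lt_of_le hjge with heq | hlt
        · rwa [show j = ⟨Nat.find hex, hm0n⟩ from Fin.ext (by simp; omega)]
        · exact hmono ((j : ℕ) - Nat.find hex) ⟨Nat.find hex, hm0n⟩ j (by simp; omega) hm0q
    · push_neg at hex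
      refine ⟨Fin.last n, fun j _ => ?_, fun j hj => ?_⟩
      · have := hex (j : ℕ) j.isLt
        simpa using this
      · exfalso
        have := j.isLt
        rw [Fin.val_last] at hj
        omega
  -- cardinality
  have hcard : ∀ i : Fin (n + 1), (∀ j : Fin n, (j : ℕ) < (i : ℕ) → q j = p) →
      Nat.card ↥(f i) = p ^ (i : ℕ) := by
    intro i
    induction i using Fin.induction with
    | zero => intro _; rw [h0]; simp
    | succ i ihi =>
      intro hall
      have h2 := Subgroup.index_mul_card
        (G := ↥(f i.succ)) (H := (f i.castSucc).subgroupOf (f i.succ))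
      have h3 : Nat.card ↥((f i.castSucc).subgroupOf (f i.succ)) = Nat.card ↥(f i.castSucc) :=
        Nat.card_congr (Subgroup.subgroupOfEquivOfLe (hstep i).1).toEquiv
      rw [h3] at h2
      have h4 : Nat.card ↥(f i.succ) = q i * Nat.card ↥(f i.castSucc) := h2.symm
      rw [h4, ihi (fun j hj => hall j (by simp at hj ⊢; omega)),
        hall i (by simp), Fin.val_succ, Fin.coe_castSucc, pow_succ]
      ring
  -- index
  have hindex : ∀ i : Fin (n + 1), (∀ j : Fin n, (i : ℕ) ≤ (j : ℕ) → q j ≠ p) →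
      ¬ p ∣ (f i).index := by
    intro i
    induction i using Fin.reverseInduction with
    | last => intro _; rw [htop, Subgroup.index_top]; exact hp.not_dvd_one
    | cast i ihi =>
      intro hall hdvd
      have hrel := Subgroup.relIndex_mul_index (hstep i).1
      rw [← hrel] at hdvd
      rcases (Nat.Prime.dvd_mul hp).mp hdvd with h | h
      · exact hall i (by simp) ((Nat.prime_dvd_prime_iff_eq hp (hstep i).2.2).mp h).symm
      · exact ihi (fun j hj => hall j (by simp at hj ⊢; omega)) h
  have hpgk : IsPGroup p ↥(f k) := IsPGroup.of_card (hcard k hbelow)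
  have hndvd : ¬ p ∣ (f k).index := hindex k habove
  -- normality
  have hnorm : ∀ i : Fin (n + 1), (k : ℕ) ≤ (i : ℕ) →
      ∀ x ∈ f i, ∀ h ∈ f k, x * h * x⁻¹ ∈ f k := by
    intro i
    induction i using Fin.induction with
    | zero =>
      intro hk0 x hx h hh
      simp only [Fin.val_zero] at hk0
      have hk : k = 0 := Fin.ext (by simp only [Fin.val_zero]; omega)
      rw [hk, h0, Subgroup.mem_bot] at hh
      rw [hk, h0, Subgroup.mem_bot]
      simp [hh]
    | succ i ihi =>
      intro hki x hx h hh
      rcases Nat.eq_or_lt_of_le hki with heq | hlt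
      · have hk : k = i.succ := Fin.ext (by simpa using heq)
        rw [hk] at hh ⊢
        exact mul_mem (mul_mem hx hh) (inv_mem hx)
      · have hki' : (k : ℕ) ≤ (i.castSucc : ℕ) := by
          rw [Fin.coe_castSucc]
          rw [Fin.val_succ] at hlt
          omega
        have hIH := ihi hki'
        have hnormzr : f i.castSucc ≤ Subgroup.normalizer (f k : Set G) := by
          intro y hy
          rw [Subgroup.mem_normalizer_iff]
          intro z
          constructor
          · intro hz; exact hIH y hy z hz
          · intro hz
            have h2 := hIH y⁻¹ (inv_mem hy) _ hz
            have h3 : y⁻¹ * (y * z * y⁻¹) * y⁻¹⁻¹ = z := by group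
            rwa [h3] at h2
        have hkle : f k ≤ f i.castSucc := hlechain i.castSucc k hki'
        have hQle : (f k).map (MulAut.conj x).toMonoidHom ≤ f i.castSucc := by
          rintro _ ⟨z, hz, rfl⟩
          exact (hstep i).2.1 x hx z (hkle hz)
        have hQp : IsPGroup p ↥((f k).map (MulAut.conj x).toMonoidHom) := hpgk.map _
        have hsupp : IsPGroup p ↥((f k).map (MulAut.conj x).toMonoidHom ⊔ f k : Subgroup G) :=
          IsPGroup.to_sup_of_normal_right' hQp hpgk (hQle.trans hnormzr)
        have hmax : ((f k).map (MulAut.conj x).toMonoidHom ⊔ f k : Subgroup G) = f k :=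
          (hpgk.toSylow hndvd).is_maximal' hsupp le_sup_right
        have hQsub : (f k).map (MulAut.conj x).toMonoidHom ≤ f k := le_sup_left.trans_eq hmax
        exact hQsub ⟨h, hh, rfl⟩
  refine ⟨hsolvG, ⟨hpgk.toSylow hndvd, ?_⟩⟩
  constructor
  intro h hh g
  exact hnorm (Fin.last n) (by have := k.isLt; rw [Fin.val_last]; omega) g
    (by rw [htop]; exact Subgroup.mem_top g) h hh


theorem solvable_with_normal_sylow_iff_chain {G : Type*} [Group G] [Finite G]
    (p : ℕ) (hp : p.Prime) (hdvd : p ∣ Nat.card G) :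
    (IsSolvable G ∧ ∃ P : Sylow p G, (P : Subgroup G).Normal) ↔
      ∃ (n : ℕ) (f : Fin (n + 1) → Subgroup G),
        f 0 = ⊥ ∧ f (Fin.last n) = ⊤ ∧
        (∀ i : Fin n, f i.castSucc ≤ f i.succ ∧
          (∀ x ∈ f i.succ, ∀ h ∈ f i.castSucc, x * h * x⁻¹ ∈ f i.castSucc) ∧
          ((f i.castSucc).relIndex (f i.succ)).Prime) ∧
        ∀ i j : Fin n, (j : ℕ) = (i : ℕ) + 1 →
          (f i.castSucc).relIndex (f i.succ) ≠ p →
          (f j.castSucc).relIndex (f j.succ) ≠ p := by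
  constructor
  · rintro ⟨hs, P, hP⟩
    obtain ⟨n, f, h0, htop, hstep, hmono⟩ :=
      aux_forward p hp (Nat.card G) G le_rfl hs P hP
    exact ⟨n, f, h0, htop, hstep, fun i j hj hi => hmono i j (by omega) hi⟩
  · rintro ⟨n, f, h0, htop, hstep, hcons⟩
    exact aux_backward p hp hdvd n f h0 htop hstep hcons
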